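/- Let V be a finite-dimensional real vector space and L ⊆ 𝕋_ℂV a lagrangian subspace with E := pr_{V_ℂ}(L), ε ∈ Λ²E* the unique form with L = L(E,ε), Δ := (E ∩ Ē) ∩ V and ω_Δ := Im(ε|_{Δ×Δ}). Define L̂ := L(Δ, ω_Δ) = {X + α ∈ 𝕋V : X ∈ Δ, α(Y) = ω_Δ(X,Y) for all Y ∈ Δ}. Then L̂ = {X + Im(ξ) : X ∈ V, ξ ∈ (V_ℂ)*, X + ξ ∈ L}, where Im(ξ) ∈ V* is the real linear form v ↦ Im(ξ(v)); in particular L̂ is a lagrangian subspace of 𝕋V. -/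

import Mathlib

open TensorProduct Module

noncomputable section

namespace CDirac


/-- The real generalized tangent space `V ⊕ V*`. -/
abbrev TR (V : Type*) [AddCommGroup V] [Module ℝ V] := V × (V →ₗ[ℝ] ℝ)

variable {V : Type*} [AddCommGroup V] [Module ℝ V]

/-- The canonical pairing `⟨X+ξ, Y+η⟩ = (η X + ξ Y)/2` on `𝕋V`. -/
def pairR (a b : TR V) : ℝ := (b.2 a.1 + a.2 b.1) / 2

lemma pairR_add_left (a a' b : TR V) : pairR (a + a') b = pairR a b + pairR a' b := by
  simp only [pairR, Prod.fst_add, Prod.snd_add, map_add, LinearMap.add_apply]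
  ring

lemma pairR_smul_left (c : ℝ) (a b : TR V) : pairR (c • a) b = c * pairR a b := by
  simp only [pairR, Prod.smul_fst, Prod.smul_snd, map_smul, LinearMap.smul_apply,
    smul_eq_mul]
  ring

/-- Orthogonal complement with respect to the pairing on `𝕋V`. -/
def orthR (L : Submodule ℝ (TR V)) : Submodule ℝ (TR V) where
  carrier := {a | ∀ b ∈ L, pairR a b = 0}
  zero_mem' := fun b _ => by simp [pairR]
  add_mem' := fun {a a'} ha ha' b hb => by
    rw [pairR_add_left, ha b hb, ha' b hb, add_zero]
  smul_mem' := fun c a ha b hb => by rw [pairR_smul_left, ha b hb, mul_zero]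

/-- A real lagrangian subspace: `L = L^⊥`. -/
def IsLagrangianR (L : Submodule ℝ (TR V)) : Prop := L = orthR L

/-- An isotropic subspace of `𝕋V`. -/
def IsIsotropicR (K : Submodule ℝ (TR V)) : Prop := ∀ a ∈ K, ∀ b ∈ K, pairR a b = 0

/-- The quotient `K^⊥/K`. -/
abbrev quotK (K : Submodule ℝ (TR V)) :=
  @HasQuotient.Quotient ↥(orthR K) (Submodule ℝ ↥(orthR K))
    (Submodule.hasQuotient (R := ℝ) (M := ↥(orthR K))) (K.comap (orthR K).subtype)

/-- The quotient map `K^⊥ → K^⊥/K`. -/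
def mkK (K : Submodule ℝ (TR V)) : ↥(orthR K) →ₗ[ℝ] quotK K :=
  @Submodule.mkQ ℝ ↥(orthR K) _ (orthR K).addCommGroup _ (K.comap (orthR K).subtype)




/-- The complexification `V_ℂ = ℂ ⊗_ℝ V`. -/
abbrev Cx (V : Type*) [AddCommGroup V] [Module ℝ V] := ℂ ⊗[ℝ] V

/-- The complex dual `(V_ℂ)^*`. -/
abbrev DualC (V : Type*) [AddCommGroup V] [Module ℝ V] := Cx V →ₗ[ℂ] ℂ

/-- The complexified generalized tangent space `𝕋_ℂ V = V_ℂ ⊕ (V_ℂ)^*`. -/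
abbrev TCx (V : Type*) [AddCommGroup V] [Module ℝ V] := Cx V × DualC V

/-- The ℂ-bilinear pairing on `𝕋_ℂ V`. -/
def pairC (a b : TCx V) : ℂ := (b.2 a.1 + a.2 b.1) / 2

lemma pairC_add_left (a a' b : TCx V) : pairC (a + a') b = pairC a b + pairC a' b := by
  simp only [pairC, Prod.fst_add, Prod.snd_add, map_add, LinearMap.add_apply]
  ring

lemma pairC_smul_left (c : ℂ) (a b : TCx V) : pairC (c • a) b = c * pairC a b := by
  simp only [pairC, Prod.smul_fst, Prod.smul_snd, map_smul, LinearMap.smul_apply,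
    smul_eq_mul]
  ring

/-- Orthogonal complement with respect to the ℂ-bilinear pairing on `𝕋_ℂ V`. -/
def orthC (L : Submodule ℂ (TCx V)) : Submodule ℂ (TCx V) where
  carrier := {a | ∀ b ∈ L, pairC a b = 0}
  zero_mem' := fun b _ => by simp [pairC]
  add_mem' := fun {a a'} ha ha' b hb => by
    rw [pairC_add_left, ha b hb, ha' b hb, add_zero]
  smul_mem' := fun c a ha b hb => by rw [pairC_smul_left, ha b hb, mul_zero]

/-- A complex lagrangian subspace: `L = L^⊥`. -/
def IsLagrangianC (L : Submodule ℂ (TCx V)) : Prop := L = orthC L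

private lemma conjCxAux_smul (z : ℂ) (x : Cx V) :
    TensorProduct.map Complex.conjAe.toLinearMap LinearMap.id (z • x) =
      starRingEnd ℂ z • TensorProduct.map Complex.conjAe.toLinearMap LinearMap.id x := by
  induction x using TensorProduct.induction_on with
  | zero => simp
  | tmul w v => simp [smul_tmul', smul_eq_mul, Complex.conjAe_coe, map_mul]
  | add x y hx hy => simp only [smul_add, map_add, hx, hy]

/-- Conjugation on `V_ℂ`, as a `conj`-semilinear map. -/
def conjCx : Cx V →ₛₗ[starRingEnd ℂ] Cx V where
  toFun := TensorProduct.map Complex.conjAe.toLinearMap LinearMap.id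
  map_add' := map_add _
  map_smul' := conjCxAux_smul

lemma conjCx_smul (z : ℂ) (x : Cx V) :
    conjCx (z • x) = starRingEnd ℂ z • conjCx x := conjCxAux_smul z x

/-- Conjugation of a complex linear functional. -/
def conjDualFun (ξ : DualC V) : DualC V where
  toFun x := starRingEnd ℂ (ξ (conjCx x))
  map_add' x y := by simp
  map_smul' z x := by
    rw [conjCx_smul, map_smul, smul_eq_mul, map_mul, RingHom.id_apply]
    simp [smul_eq_mul]

/-- Conjugation on `(V_ℂ)^*`, as a `conj`-semilinear map. -/
def conjDual : DualC V →ₛₗ[starRingEnd ℂ] DualC V where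
  toFun := conjDualFun
  map_add' ξ η := by ext x; simp [conjDualFun]
  map_smul' z ξ := by
    ext x
    simp [conjDualFun, smul_eq_mul, map_mul]

/-- Conjugation on `𝕋_ℂ V`, as a `conj`-semilinear map. -/
def conjT : TCx V →ₛₗ[starRingEnd ℂ] TCx V where
  toFun a := (conjCx a.1, conjDual a.2)
  map_add' a b := by simp [Prod.ext_iff]
  map_smul' z a := by
    simp [Prod.ext_iff, Prod.smul_fst, Prod.smul_snd, map_smulₛₗ]

instance : RingHomSurjective (starRingEnd ℂ) :=
  ⟨fun z => ⟨starRingEnd ℂ z, by simp⟩⟩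

/-- The conjugate `L̄` of a ℂ-subspace of `𝕋_ℂ V`. -/
def conjSub (L : Submodule ℂ (TCx V)) : Submodule ℂ (TCx V) := L.map conjT

/-- The conjugate `Ē` of a ℂ-subspace of `V_ℂ`. -/
def conjE (E : Submodule ℂ (Cx V)) : Submodule ℂ (Cx V) := E.map conjCx

/-- The canonical inclusion `V → V_ℂ`, `v ↦ 1 ⊗ v`. -/
def iV : V →ₗ[ℝ] Cx V := TensorProduct.mk ℝ ℂ V 1





/-- ℝ-linear auxiliary version of the ℂ-linear extension of a real functional. -/
def dualExtAux (α : V →ₗ[ℝ] ℝ) : Cx V →ₗ[ℝ] ℂ :=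
  TensorProduct.lift
    (LinearMap.mk₂ ℝ (fun z v => z * (α v : ℂ))
      (fun z w v => by push_cast; ring)
      (fun r z v => by simp only [Complex.real_smul]; ring)
      (fun z v w => by push_cast [map_add]; ring)
      (fun r z v => by simp only [map_smul, smul_eq_mul, Complex.real_smul]; push_cast; ring))

private lemma dualExtAux_smulC (α : V →ₗ[ℝ] ℝ) (z : ℂ) (x : Cx V) :
    dualExtAux α (z • x) = z * dualExtAux α x := by
  induction x using TensorProduct.induction_on with
  | zero => simp
  | tmul w v =>
      simp only [dualExtAux, smul_tmul', lift.tmul, LinearMap.mk₂_apply, smul_eq_mul]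
      ring
  | add x y hx hy => simp only [smul_add, map_add, hx, hy]; ring

/-- The ℂ-linear extension of a real functional `α : V → ℝ` to `V_ℂ`. -/
def dualExtFun (α : V →ₗ[ℝ] ℝ) : DualC V where
  toFun := dualExtAux α
  map_add' := map_add _
  map_smul' z x := by simpa using dualExtAux_smulC α z x

private lemma dualExtFun_tmul (α : V →ₗ[ℝ] ℝ) (z : ℂ) (v : V) :
    dualExtFun α (z ⊗ₜ[ℝ] v) = z * (α v : ℂ) := by
  simp [dualExtFun, dualExtAux]

/-- The ℂ-linear extension map `V^* → (V_ℂ)^*`, as an ℝ-linear map. -/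
def dualExt : (V →ₗ[ℝ] ℝ) →ₗ[ℝ] DualC V where
  toFun := dualExtFun
  map_add' α β := by
    apply LinearMap.ext; intro x
    induction x using TensorProduct.induction_on with
    | zero => simp
    | tmul w v =>
        simp only [dualExtFun_tmul, LinearMap.add_apply]
        push_cast
        ring
    | add x y hx hy =>
        simp only [map_add, LinearMap.add_apply] at *
        rw [hx, hy]
  map_smul' r α := by
    apply LinearMap.ext; intro x
    induction x using TensorProduct.induction_on with
    | zero => simp
    | tmul w v =>
        simp only [dualExtFun_tmul, RingHom.id_apply, LinearMap.smul_apply,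
          LinearMap.smul_apply, smul_eq_mul, Complex.real_smul]
        push_cast
        ring
    | add x y hx hy =>
        simp only [map_add, RingHom.id_apply, LinearMap.smul_apply, smul_eq_mul] at *
        rw [hx, hy]

/-- The canonical inclusion `𝕋V → 𝕋_ℂV`. -/
def iT : TR V →ₗ[ℝ] TCx V where
  toFun a := (iV a.1, dualExt a.2)
  map_add' a b := by simp [Prod.ext_iff]
  map_smul' r a := by simp [Prod.ext_iff]



/-- Auxiliary ℝ-linear version of the ℂ-bilinear extension of a real bilinear form. -/
def bilinExtAux (B : V →ₗ[ℝ] V →ₗ[ℝ] ℝ) : Cx V →ₗ[ℝ] DualC V :=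
  TensorProduct.lift
    (LinearMap.mk₂ ℝ (fun z v => z • dualExt (B v))
      (fun z w v => by simp only [add_smul])
      (fun r z v => by simp only [smul_assoc])
      (fun z v w => by simp only [map_add, smul_add])
      (fun r z v => by simp only [map_smul]; exact smul_comm z r _))

private lemma bilinExtAux_smulC (B : V →ₗ[ℝ] V →ₗ[ℝ] ℝ) (z : ℂ) (x : Cx V) :
    bilinExtAux B (z • x) = z • bilinExtAux B x := by
  induction x using TensorProduct.induction_on with
  | zero => simp
  | tmul w v =>
      simp only [bilinExtAux, smul_tmul', lift.tmul, LinearMap.mk₂_apply, smul_eq_mul,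
        mul_smul]
  | add x y hx hy => simp only [smul_add, map_add, hx, hy]

/-- The ℂ-bilinear extension of a real bilinear form `B : V × V → ℝ` to `V_ℂ`. -/
def bilinExt (B : V →ₗ[ℝ] V →ₗ[ℝ] ℝ) : Cx V →ₗ[ℂ] DualC V where
  toFun := bilinExtAux B
  map_add' := map_add _
  map_smul' z x := by simpa using bilinExtAux_smulC B z x

/-- The `B`-transformation `e^B(X+ξ) = X + ξ + B̃(X,·)` of `𝕋_ℂV`, for a real `B`. -/
def eB (B : V →ₗ[ℝ] V →ₗ[ℝ] ℝ) : TCx V →ₗ[ℂ] TCx V where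
  toFun a := (a.1, a.2 + bilinExt B a.1)
  map_add' a b := by
    simp only [Prod.fst_add, Prod.snd_add, map_add, Prod.mk_add_mk, Prod.mk.injEq]
    exact ⟨trivial, by abel⟩
  map_smul' z a := by
    simp only [Prod.smul_fst, Prod.smul_snd, map_smul, RingHom.id_apply, Prod.smul_mk,
      Prod.mk.injEq, smul_add]

/-- The real `B`-transformation `e^B(X+α) = X + α + B(X,·)` of `𝕋V`. -/
def eBR (B : V →ₗ[ℝ] V →ₗ[ℝ] ℝ) : TR V →ₗ[ℝ] TR V where
  toFun a := (a.1, a.2 + B a.1)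
  map_add' a b := by
    simp only [Prod.fst_add, Prod.snd_add, map_add, Prod.mk_add_mk, Prod.mk.injEq]
    exact ⟨trivial, by abel⟩
  map_smul' r a := by
    simp only [Prod.smul_fst, Prod.smul_snd, map_smul, RingHom.id_apply, Prod.smul_mk,
      Prod.mk.injEq, smul_add]


/-- The range `E = pr_{V_ℂ}(L)` of a subspace of `𝕋_ℂV`. -/
def Esub (L : Submodule ℂ (TCx V)) : Submodule ℂ (Cx V) :=
  L.map (LinearMap.fst ℂ (Cx V) (DualC V))

/-- The real index `r = dim_ℂ (L ∩ L̄)`. -/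
def riL (L : Submodule ℂ (TCx V)) : ℕ := finrank ℂ ↥(L ⊓ conjSub L)

/-- The real part `K = (L ∩ L̄) ∩ 𝕋V`, as a subspace of `𝕋V`. -/
def Ksub (L : Submodule ℂ (TCx V)) : Submodule ℝ (TR V) :=
  ((L ⊓ conjSub L).restrictScalars ℝ).comap iT

/-- The distribution `D = (E + Ē) ∩ V`, as a subspace of `V`. -/
def Dsub (L : Submodule ℂ (TCx V)) : Submodule ℝ V :=
  ((Esub L ⊔ conjE (Esub L)).restrictScalars ℝ).comap iV

/-- The distribution `Δ = (E ∩ Ē) ∩ V`, as a subspace of `V`. -/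
def DeltaSub (L : Submodule ℂ (TCx V)) : Submodule ℝ V :=
  ((Esub L ⊓ conjE (Esub L)).restrictScalars ℝ).comap iV

/-- The order `s = dim V - dim D`. -/
def orderL (L : Submodule ℂ (TCx V)) : ℕ := finrank ℝ V - finrank ℝ ↥(Dsub L)

/-- The (normalized) type `k = dim_ℂ(E + Ē) - dim_ℂ E`. -/
def typeL (L : Submodule ℂ (TCx V)) : ℕ :=
  finrank ℂ ↥(Esub L ⊔ conjE (Esub L)) - finrank ℂ ↥(Esub L)


end CDirac


namespace CDirac

section Aux

variable {V : Type*} [AddCommGroup V] [Module ℝ V]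

lemma conjCx_tmul (z : ℂ) (v : V) :
    (conjCx (z ⊗ₜ[ℝ] v) : Cx V) = (starRingEnd ℂ z) ⊗ₜ[ℝ] v := by
  simp [conjCx, Complex.conjAe_coe]

lemma conjCx_conjCx (x : Cx V) : conjCx (conjCx x : Cx V) = x := by
  induction x using TensorProduct.induction_on with
  | zero => simp
  | tmul z v => simp [conjCx_tmul]
  | add x y hx hy => rw [map_add, map_add, hx, hy]

lemma conjCx_iV (v : V) : conjCx (iV v : Cx V) = iV v := by
  show conjCx ((1:ℂ) ⊗ₜ[ℝ] v) = (1:ℂ) ⊗ₜ[ℝ] v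
  rw [conjCx_tmul]; simp

lemma conjCx_mem_conjE {E : Submodule ℂ (Cx V)} {x : Cx V} (hx : x ∈ E) :
    conjCx x ∈ conjE E := ⟨x, hx, rfl⟩

lemma mem_conjE_iff {E : Submodule ℂ (Cx V)} {x : Cx V} :
    x ∈ conjE E ↔ conjCx x ∈ E := by
  constructor
  · rintro ⟨y, hy, rfl⟩; rwa [conjCx_conjCx]
  · intro h; exact ⟨conjCx x, h, conjCx_conjCx x⟩

/-- Real part map `V_ℂ → V`. -/
def ReVmap : Cx V →ₗ[ℝ] V :=
  TensorProduct.lift ((LinearMap.lsmul ℝ V).comp Complex.reLm)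

/-- Imaginary part map `V_ℂ → V`. -/
def ImVmap : Cx V →ₗ[ℝ] V :=
  TensorProduct.lift ((LinearMap.lsmul ℝ V).comp Complex.imLm)

lemma iV_smul_real (r : ℝ) (v : V) : (iV (r • v) : Cx V) = (r : ℂ) ⊗ₜ[ℝ] v := by
  show (1:ℂ) ⊗ₜ[ℝ] (r • v) = (r : ℂ) ⊗ₜ[ℝ] v
  rw [tmul_smul, smul_tmul', Complex.real_smul, mul_one]

lemma iV_decomp (x : Cx V) :
    iV (ReVmap x) + Complex.I • iV (ImVmap x) = x := by
  induction x using TensorProduct.induction_on with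
  | zero => simp
  | tmul z v =>
      have h1 : ReVmap ((z : ℂ) ⊗ₜ[ℝ] v) = z.re • v := by
        simp [ReVmap]
      have h2 : ImVmap ((z : ℂ) ⊗ₜ[ℝ] v) = z.im • v := by
        simp [ImVmap]
      rw [h1, h2, iV_smul_real, iV_smul_real, smul_tmul', ← add_tmul]
      congr 1
      rw [smul_eq_mul, mul_comm, Complex.re_add_im]
  | add x y hx hy =>
      conv_rhs => rw [← hx, ← hy]
      simp only [map_add, smul_add]
      abel

lemma iV_re_mem {W : Submodule ℂ (Cx V)} (hWc : ∀ x ∈ W, conjCx x ∈ W)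
    {w : Cx V} (hw : w ∈ W) : (iV (ReVmap w) : Cx V) ∈ W ∧ (iV (ImVmap w) : Cx V) ∈ W := by
  have hd := iV_decomp w
  set a : Cx V := iV (ReVmap w) with ha
  set b : Cx V := iV (ImVmap w) with hb
  have hcb : conjCx b = b := conjCx_iV _
  have hca : conjCx a = a := conjCx_iV _
  have hc : conjCx w = a - Complex.I • b := by
    rw [← hd, map_add, conjCx_smul, hca, hcb]
    simp [sub_eq_add_neg, neg_smul]
  have haw : a = (2⁻¹ : ℂ) • (w + conjCx w) := by
    rw [hc, ← hd]; module
  have hIb : Complex.I • b = (2⁻¹ : ℂ) • (w - conjCx w) := by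
    rw [hc, ← hd]; module
  have hbw : b = (-Complex.I) • ((2⁻¹ : ℂ) • (w - conjCx w)) := by
    rw [← hIb, smul_smul, neg_mul, Complex.I_mul_I, neg_neg, one_smul]
  constructor
  · rw [haw]; exact W.smul_mem _ (W.add_mem hw (hWc w hw))
  · rw [hbw]; exact W.smul_mem _ (W.smul_mem _ (W.sub_mem hw (hWc w hw)))

lemma dualExt_iV (β : V →ₗ[ℝ] ℝ) (v : V) :
    dualExt β (iV v : Cx V) = (β v : ℂ) := by
  show dualExtFun β ((1:ℂ) ⊗ₜ[ℝ] v) = (β v : ℂ)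
  rw [dualExtFun_tmul, one_mul]

lemma dualExt_conj (β : V →ₗ[ℝ] ℝ) (x : Cx V) :
    dualExt β (conjCx x) = starRingEnd ℂ (dualExt β x) := by
  induction x using TensorProduct.induction_on with
  | zero => simp
  | tmul z v =>
      rw [conjCx_tmul]
      show dualExtFun β _ = starRingEnd ℂ (dualExtFun β _)
      rw [dualExtFun_tmul, dualExtFun_tmul, map_mul, Complex.conj_ofReal]
  | add x y hx hy => simp only [map_add, hx, hy]

lemma dualExt_vanish_inf {E : Submodule ℂ (Cx V)} {β : V →ₗ[ℝ] ℝ}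
    (hβ : ∀ v : V, iV v ∈ E → iV v ∈ conjE E → β v = 0)
    {w : Cx V} (hw : w ∈ E ⊓ conjE E) : dualExt β w = 0 := by
  have hWc : ∀ x ∈ E ⊓ conjE E, conjCx x ∈ E ⊓ conjE E := by
    intro x hx
    rw [Submodule.mem_inf] at hx ⊢
    exact ⟨mem_conjE_iff.mp hx.2, conjCx_mem_conjE hx.1⟩
  obtain ⟨hamem, hbmem⟩ := iV_re_mem hWc hw
  have h1 : β (ReVmap w) = 0 :=
    hβ _ (Submodule.mem_inf.mp hamem).1 (Submodule.mem_inf.mp hamem).2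
  have h2 : β (ImVmap w) = 0 :=
    hβ _ (Submodule.mem_inf.mp hbmem).1 (Submodule.mem_inf.mp hbmem).2
  calc dualExt β w = dualExt β (iV (ReVmap w) + Complex.I • iV (ImVmap w)) := by
        rw [iV_decomp]
    _ = 0 := by
        rw [map_add, map_smul, dualExt_iV, dualExt_iV, h1, h2]
        simp

lemma exists_proj (E : Submodule ℂ (Cx V)) :
    ∃ P : Cx V →ₗ[ℂ] Cx V, (∀ x ∈ E, P x = x) ∧
      (∀ x ∈ conjE E, P x ∈ E ⊓ conjE E) := by
  classical
  set F := conjE E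
  set W : Submodule ℂ (Cx V) := E ⊓ F with hWdef
  obtain ⟨C₁', hC₁'⟩ := Submodule.exists_isCompl (W.comap F.subtype)
  set C₁ : Submodule ℂ (Cx V) := C₁'.map F.subtype with hC₁def
  have hEC₁ : Disjoint E C₁ := by
    rw [Submodule.disjoint_def]
    intro x hxE hxC₁
    obtain ⟨y, hy, rfl⟩ := hxC₁
    have hyW : y ∈ W.comap F.subtype := by
      simp only [Submodule.mem_comap]
      exact Submodule.mem_inf.mpr ⟨hxE, y.2⟩
    have := hC₁'.disjoint.le_bot (Submodule.mem_inf.mpr ⟨hyW, hy⟩)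
    simp only [Submodule.mem_bot] at this
    rw [this]; rfl
  have hFle : F ≤ W ⊔ C₁ := by
    intro x hx
    have hmem : (⟨x, hx⟩ : F) ∈ (W.comap F.subtype) ⊔ C₁' := by
      rw [hC₁'.sup_eq_top]; trivial
    obtain ⟨y, hy, z, hz, hyz⟩ := Submodule.mem_sup.mp hmem
    refine Submodule.mem_sup.mpr ⟨y, hy, z, Submodule.mem_map_of_mem hz, ?_⟩
    have := congrArg (F.subtype) hyz
    simpa using this
  obtain ⟨C₂, hC₂⟩ := Submodule.exists_isCompl (E ⊔ C₁)
  set C : Submodule ℂ (Cx V) := C₁ ⊔ C₂ with hCdef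
  have hcompl : IsCompl E C := by
    constructor
    · rw [Submodule.disjoint_def]
      intro x hxE hxC
      obtain ⟨c₁, hc₁, c₂, hc₂, rfl⟩ := Submodule.mem_sup.mp hxC
      have h2 : c₂ ∈ (E ⊔ C₁) ⊓ C₂ := by
        refine Submodule.mem_inf.mpr ⟨?_, hc₂⟩
        have hrew : c₂ = (c₁ + c₂) - c₁ := by abel
        rw [hrew]
        exact Submodule.sub_mem _ (Submodule.mem_sup_left hxE)
          (Submodule.mem_sup_right hc₁)
      have hc₂0 : c₂ = 0 := by
        have := hC₂.disjoint.le_bot h2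
        simpa using this
      rw [hc₂0, add_zero] at hxE ⊢
      have := hEC₁.le_bot (Submodule.mem_inf.mpr ⟨hxE, hc₁⟩)
      simpa using this
    · rw [codisjoint_iff, hCdef, ← sup_assoc, hC₂.sup_eq_top]
  refine ⟨E.subtype.comp (E.projectionOnto C hcompl), ?_, ?_⟩
  · intro x hx
    simp [Submodule.projectionOnto_apply_of_mem_left hcompl hx]
  · intro x hx
    obtain ⟨w, hw, c, hc, rfl⟩ := Submodule.mem_sup.mp (hFle hx)
    have hcC : c ∈ C := Submodule.mem_sup_left hc
    have hwE : w ∈ E := (Submodule.mem_inf.mp hw).1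
    simp only [LinearMap.comp_apply, map_add,
      Submodule.projectionOnto_apply_of_mem_left hcompl hwE,
      Submodule.projectionOnto_apply_of_mem_right hcompl hcC]
    simpa using hw

lemma conjDualFun_apply (ξ : DualC V) (x : Cx V) :
    (conjDualFun ξ : DualC V) x = starRingEnd ℂ (ξ (conjCx x)) := rfl

/-- Key construction: real functionals annihilating `Δ` lift to elements of `Ann E`
whose imaginary part on `V` is the given functional. -/
lemma lemA (E : Submodule ℂ (Cx V)) (β : V →ₗ[ℝ] ℝ)
    (hβ : ∀ v : V, iV v ∈ E → iV v ∈ conjE E → β v = 0) :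
    ∃ η : DualC V, (∀ x ∈ E, η x = 0) ∧ ∀ v : V, (η (iV v)).im = β v := by
  obtain ⟨P, hPE, hPF⟩ := exists_proj E
  set ζ : DualC V := dualExt β with hζ
  set χ : DualC V := Complex.I • ((2:ℂ) • (ζ.comp P) - ζ) with hχ
  have hχE : ∀ x ∈ E, χ x = Complex.I * ζ x := by
    intro x hx
    simp only [hχ, LinearMap.smul_apply, LinearMap.sub_apply, LinearMap.comp_apply,
      hPE x hx, smul_eq_mul]
    ring
  have hχF : ∀ x ∈ conjE E, χ x = -(Complex.I * ζ x) := by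
    intro x hx
    have h0 : ζ (P x) = 0 := dualExt_vanish_inf hβ (hPF x hx)
    simp only [hχ, LinearMap.smul_apply, LinearMap.sub_apply, LinearMap.comp_apply,
      h0, smul_eq_mul]
    ring
  set χ' : DualC V := (2⁻¹ : ℂ) • (χ + conjDualFun χ) with hχ'
  have hζconj : ∀ x : Cx V, ζ (conjCx x) = starRingEnd ℂ (ζ x) := dualExt_conj β
  have hχ'E : ∀ x ∈ E, χ' x = Complex.I * ζ x := by
    intro x hx
    have hcx : conjCx x ∈ conjE E := conjCx_mem_conjE hx
    simp only [hχ', LinearMap.smul_apply, LinearMap.add_apply, conjDualFun_apply,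
      hχF _ hcx, hχE x hx, hζconj x, smul_eq_mul]
    rw [map_neg, map_mul, Complex.conj_I, Complex.conj_conj]
    ring
  have hχ'im : ∀ v : V, (χ' (iV v)).im = 0 := by
    intro v
    have : χ' (iV v) = (2⁻¹ : ℂ) * (χ (iV v) + starRingEnd ℂ (χ (iV v))) := by
      simp only [hχ', LinearMap.smul_apply, LinearMap.add_apply, conjDualFun_apply,
        conjCx_iV, smul_eq_mul]
    rw [this, Complex.add_conj]
    simp
  refine ⟨Complex.I • ζ - χ', fun x hx => ?_, fun v => ?_⟩
  · simp only [LinearMap.sub_apply, LinearMap.smul_apply, smul_eq_mul, hχ'E x hx,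
      sub_self]
  · simp only [LinearMap.sub_apply, LinearMap.smul_apply, smul_eq_mul, Complex.sub_im,
      hχ'im v, sub_zero, hζ, dualExt_iV]
    simp

lemma mem_of_forall_ann {Δ : Submodule ℝ V} {X : V}
    (h : ∀ β : V →ₗ[ℝ] ℝ, (∀ y ∈ Δ, β y = 0) → β X = 0) : X ∈ Δ := by
  rw [← Submodule.Quotient.mk_eq_zero Δ,
    ← Module.forall_dual_apply_eq_zero_iff ℝ (Submodule.Quotient.mk X : V ⧸ Δ)]
  intro f
  have : (f ∘ₗ Δ.mkQ) X = 0 := by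
    refine h (f ∘ₗ Δ.mkQ) (fun y hy => ?_)
    simp [Submodule.Quotient.mk_eq_zero, (Submodule.Quotient.mk_eq_zero Δ).mpr hy]
  simpa using this

lemma exists_ext (E : Submodule ℂ (Cx V)) (f : ↥E →ₗ[ℂ] ℂ) :
    ∃ g : DualC V, ∀ x : Cx V, ∀ hx : x ∈ E, g x = f ⟨x, hx⟩ := by
  obtain ⟨g, hg⟩ := f.exists_extend
  exact ⟨g, fun x hx => by rw [← hg]; rfl⟩

end Aux

end CDirac

open CDirac Module

/-- For a lagrangian `L = L(E,ε) ⊆ 𝕋_ℂV`, the associated real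
distribution `L̂ = L(Δ, ω_Δ)` equals `{X + Im ξ : X + ξ ∈ L}`; in particular `L̂` is a
lagrangian subspace of `𝕋V`. -/
theorem stmt14 (V : Type*) [AddCommGroup V] [Module ℝ V] [FiniteDimensional ℝ V]
    (L : Submodule ℂ (TCx V)) (hL : IsLagrangianC L)
    (E : Submodule ℂ (Cx V)) (hE : E = Esub L)
    (ε : ↥E →ₗ[ℂ] ↥E →ₗ[ℂ] ℂ) (halt : ∀ x : ↥E, ε x x = 0)
    (hchar : ∀ a : TCx V, a ∈ L ↔ ∃ h : a.1 ∈ E, ∀ y : ↥E, a.2 ↑y = ε ⟨a.1, h⟩ y) :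
    -- `L̂ := L(Δ, ω_Δ)` equals `{X + Im ξ : X + ξ ∈ L}` ...
    {a : TR V | ∃ (h1 : iV a.1 ∈ E) (_ : iV a.1 ∈ conjE E),
        ∀ (Y : V) (g1 : iV Y ∈ E) (_ : iV Y ∈ conjE E),
          a.2 Y = (ε ⟨iV a.1, h1⟩ ⟨iV Y, g1⟩).im} =
      {a : TR V | ∃ ξ : DualC V, (iV a.1, ξ) ∈ L ∧ ∀ v : V, a.2 v = (ξ (iV v)).im} ∧
    -- ... and is a lagrangian subspace of `𝕋V`.
    ∃ Lh : Submodule ℝ (TR V),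
      (Lh : Set (TR V)) =
        {a : TR V | ∃ (h1 : iV a.1 ∈ E) (_ : iV a.1 ∈ conjE E),
          ∀ (Y : V) (g1 : iV Y ∈ E) (_ : iV Y ∈ conjE E),
            a.2 Y = (ε ⟨iV a.1, h1⟩ ⟨iV Y, g1⟩).im} ∧
      IsLagrangianR Lh := by
  classical
  set T : Set (TR V) := {a : TR V | ∃ (h1 : iV a.1 ∈ E) (_ : iV a.1 ∈ conjE E),
      ∀ (Y : V) (g1 : iV Y ∈ E) (_ : iV Y ∈ conjE E),
        a.2 Y = (ε ⟨iV a.1, h1⟩ ⟨iV Y, g1⟩).im} with hT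
  set S : Set (TR V) := {a : TR V | ∃ ξ : DualC V,
      (iV a.1, ξ) ∈ L ∧ ∀ v : V, a.2 v = (ξ (iV v)).im} with hS
  -- extension helper
  have hext : ∀ x : Cx V, ∀ hx : x ∈ E, ∃ ξ : DualC V, (x, ξ) ∈ L ∧
      ∀ y : Cx V, ∀ hy : y ∈ E, ξ y = ε ⟨x, hx⟩ ⟨y, hy⟩ := by
    intro x hx
    obtain ⟨g, hg⟩ := exists_ext E (ε ⟨x, hx⟩)
    exact ⟨g, (hchar (x, g)).mpr ⟨hx, fun y => hg y.1 y.2⟩, fun y hy => hg y hy⟩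
  -- P1 : S ⊆ T
  have hP1 : S ⊆ T := by
    rintro ⟨X, α⟩ ⟨ξ, hξL, hξim⟩
    obtain ⟨h1, hval⟩ := (hchar (iV X, ξ)).mp hξL
    refine ⟨h1, ⟨iV X, h1, conjCx_iV X⟩, fun Y g1 _ => ?_⟩
    rw [hξim Y, hval ⟨iV Y, g1⟩]
  -- P2 : T ⊆ S
  have hP2 : T ⊆ S := by
    rintro ⟨X, α⟩ ⟨h1, h2, hα⟩
    obtain ⟨ξ₀, hξ₀L, hξ₀⟩ := hext (iV X) h1
    set γ : V →ₗ[ℝ] ℝ := Complex.imLm ∘ₗ (ξ₀.restrictScalars ℝ) ∘ₗ iV with hγ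
    have hβ : ∀ v, iV v ∈ E → iV v ∈ conjE E → (α - γ) v = 0 := by
      intro v g1 g2
      have hγv : γ v = (ξ₀ (iV v)).im := rfl
      simp only [LinearMap.sub_apply, hγv, hα v g1 g2, hξ₀ (iV v) g1, sub_self]
    obtain ⟨η, hηE, hηim⟩ := lemA E (α - γ) hβ
    refine ⟨ξ₀ + η, ?_, fun v => ?_⟩
    · refine (hchar _).mpr ⟨h1, fun y => ?_⟩
      show ξ₀ y.1 + η y.1 = _
      rw [hηE y.1 y.2, add_zero, hξ₀ y.1 y.2]
    · have h3 := hηim v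
      simp only [LinearMap.sub_apply] at h3
      have hγv : γ v = (ξ₀ (iV v)).im := rfl
      show α v = ((ξ₀ + η) (iV v)).im
      rw [LinearMap.add_apply, Complex.add_im, h3, ← hγv]
      ring
  have hTS : T = S := Set.Subset.antisymm hP2 hP1
  -- the submodule
  set Lh : Submodule ℝ (TR V) :=
    { carrier := S
      zero_mem' := by
        refine ⟨0, ?_, fun v => by simp⟩
        have h00 : ((iV ((0 : TR V).1), (0 : DualC V)) : TCx V) = 0 := by
          simp [Prod.ext_iff]
        rw [h00]; exact L.zero_mem
      add_mem' := by
        rintro a b ⟨ξ, hξ, hi⟩ ⟨η, hη, hj⟩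
        refine ⟨ξ + η, ?_, fun v => ?_⟩
        · have : ((iV ((a + b).1), ξ + η) : TCx V) = (iV a.1, ξ) + (iV b.1, η) := by
            simp [Prod.ext_iff]
          rw [this]; exact L.add_mem hξ hη
        · show a.2 v + b.2 v = _
          rw [hi v, hj v, LinearMap.add_apply, Complex.add_im]
      smul_mem' := by
        rintro c a ⟨ξ, hξ, hi⟩
        refine ⟨(c : ℂ) • ξ, ?_, fun v => ?_⟩
        · have : ((iV ((c • a).1), (c:ℂ) • ξ) : TCx V) = (c:ℂ) • (iV a.1, ξ) := by
            refine Prod.ext ?_ rfl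
            show iV (c • a.1) = (c:ℂ) • iV a.1
            rw [map_smul, ← algebraMap_smul ℂ c (iV a.1), Complex.coe_algebraMap]
          rw [this]; exact L.smul_mem _ hξ
        · show c * a.2 v = (((c:ℂ) • ξ) (iV v)).im
          rw [hi v, LinearMap.smul_apply, smul_eq_mul, Complex.mul_im]
          simp } with hLh
  have hLhS : ∀ a : TR V, a ∈ Lh ↔ a ∈ S := fun a => Iff.rfl
  -- isotropy
  have hLL : ∀ p ∈ L, ∀ q ∈ L, pairC p q = 0 := by
    intro p hp q hq
    rw [hL] at hp
    exact hp q hq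
  have hiso : ∀ a ∈ Lh, ∀ b ∈ Lh, pairR a b = 0 := by
    rintro a ⟨ξ, hξ, hi⟩ b ⟨η, hη, hj⟩
    have h0 := hLL _ hξ _ hη
    have h0' : η (iV a.1) + ξ (iV b.1) = 0 := by
      have : pairC (iV a.1, ξ) (iV b.1, η) = (η (iV a.1) + ξ (iV b.1)) / 2 := rfl
      rw [this, div_eq_zero_iff] at h0
      rcases h0 with h | h
      · exact h
      · norm_num at h
    show (b.2 a.1 + a.2 b.1) / 2 = 0
    rw [hj a.1, hi b.1, ← Complex.add_im, h0', Complex.zero_im, zero_div]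
  -- lagrangian
  have hlag : IsLagrangianR Lh := by
    apply le_antisymm
    · intro a ha b hb
      exact hiso a ha b hb
    · rintro ⟨X, α⟩ ha
      have ha' : ∀ b ∈ Lh, pairR (X, α) b = 0 := ha
      have hann : ∀ β : V →ₗ[ℝ] ℝ, (∀ v, iV v ∈ E → iV v ∈ conjE E → β v = 0) →
          (((0 : V), β) : TR V) ∈ S := by
        intro β hβ
        obtain ⟨η, hηE, hηim⟩ := lemA E β hβ
        refine ⟨η, ?_, fun v => (hηim v).symm⟩
        have h0E : (iV (0:V) : Cx V) ∈ E := by rw [map_zero]; exact E.zero_mem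
        refine (hchar _).mpr ⟨h0E, fun y => ?_⟩
        rw [hηE y.1 y.2]
        have hz : (⟨iV (0:V), h0E⟩ : ↥E) = 0 := Subtype.ext (by simp)
        rw [hz, map_zero]
        rfl
      set Δ : Submodule ℝ V := ((E ⊓ conjE E).restrictScalars ℝ).comap iV with hΔ
      have hΔmem : ∀ v : V, v ∈ Δ ↔ (iV v ∈ E ∧ iV v ∈ conjE E) := fun v => by
        simp [hΔ, Submodule.mem_comap, Submodule.mem_inf]
      have hXΔ : X ∈ Δ := by
        apply mem_of_forall_ann
        intro β hβ0
        have hβ : ∀ v, iV v ∈ E → iV v ∈ conjE E → β v = 0 := fun v g1 g2 =>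
          hβ0 v ((hΔmem v).mpr ⟨g1, g2⟩)
        have h := ha' _ ((hLhS _).mpr (hann β hβ))
        have h' : (β X + α 0) / 2 = 0 := h
        rw [map_zero] at h'
        linarith
      have hXE : (iV X : Cx V) ∈ E := ((hΔmem X).mp hXΔ).1
      obtain ⟨ξ₀, hξ₀L, hξ₀⟩ := hext (iV X) hXE
      set γ : V →ₗ[ℝ] ℝ := Complex.imLm ∘ₗ (ξ₀.restrictScalars ℝ) ∘ₗ iV with hγ
      have hXγ : ((X, γ) : TR V) ∈ Lh := ⟨ξ₀, hξ₀L, fun v => rfl⟩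
      have hβΔ : ∀ v, iV v ∈ E → iV v ∈ conjE E → (α - γ) v = 0 := by
        intro Y g1 g2
        obtain ⟨ξY, hξYL, hξY⟩ := hext (iV Y) g1
        have hYLh : ((Y, Complex.imLm ∘ₗ (ξY.restrictScalars ℝ) ∘ₗ iV) : TR V) ∈ Lh :=
          ⟨ξY, hξYL, fun v => rfl⟩
        have h1 := ha' _ hYLh
        have h2 := hiso _ hXγ _ hYLh
        have h1' : ((Complex.imLm ∘ₗ (ξY.restrictScalars ℝ) ∘ₗ iV) X + α Y) / 2 = 0 := h1
        have h2' : ((Complex.imLm ∘ₗ (ξY.restrictScalars ℝ) ∘ₗ iV) X + γ Y) / 2 = 0 := h2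
        have : α Y = γ Y := by linarith
        simp [this]
      have hfin : ((X, α) : TR V) = ((X, γ) : TR V) + (((0 : V), α - γ) : TR V) := by
        refine Prod.ext (by simp) ?_
        show α = γ + (α - γ)
        abel
      rw [hfin]
      exact Lh.add_mem hXγ ((hLhS _).mpr (hann (α - γ) hβΔ))
  exact ⟨hTS, Lh, hTS.symm, hlag⟩
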